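/- Let A be an m×d complex matrix with nonzero rows a_1*,…,a_m* and let b ∈ ℂ^m; suppose the system A x = b is consistent. For each ℓ = 1,…,t let w_ℓ > 0 with Σ_{ℓ=1}^{t} w_ℓ = 1 and let (v_{ℓ,1},…,v_{ℓ,n_ℓ}) be a list of row indices such that every index in {1,…,m} occurs in at least one list; let ω_v be a real relaxation parameter for each row index v. Define the affine maps Q_v x = x + ω_v((b_v − ⟨x, a_v⟩)/‖a_v‖²) a_v, the linear maps P_v x = x − ω_v(⟨x, a_v⟩/‖a_v‖²) a_v, and set Q x = Σ_{ℓ=1}^{t} w_ℓ (Q_{v_{ℓ,n_ℓ}} ∘ ⋯ ∘ Q_{v_{ℓ,1}})(x) and P x = Σ_{ℓ=1}^{t} w_ℓ (P_{v_{ℓ,n_ℓ}} ∘ ⋯ ∘ P_{v_{ℓ,1}})(x). Assume that ‖P x‖ ≤ ‖x‖ for all x ∈ ℂ^d and that ‖P x‖ = ‖x‖ implies A x = 0. Then for any initial vector x⁰ belonging to the range of A*, the iterates x^{n+1} = Q x^n converge to the unique solution of A x = b of minimal Euclidean norm. -/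

import Mathlib

/-- For a consistent system with rows `a_v*` and right-hand side `b`, the
distributed Kaczmarz iteration `x^{n+1} = Q x^n` (dispersion along lists of row indices covering
all rows, followed by weighted pooling), under the hypotheses that the associated homogeneous
operator `P` is a contraction and that `‖P x‖ = ‖x‖` forces `A x = 0`, converges to the unique
minimal-norm solution of `A x = b` whenever the initial vector lies in the range of `A*`
(= span of the `a_v`). -/
theorem stmt_11 {d m t : ℕ} (a : Fin m → EuclideanSpace ℂ (Fin d)) (ha : ∀ v, a v ≠ 0)
    (b : Fin m → ℂ) (hconsistent : ∃ x, ∀ v, (inner ℂ (a v) x : ℂ) = b v)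
    (w : Fin t → ℝ) (hw : ∀ ℓ, 0 < w ℓ) (hw1 : ∑ ℓ, w ℓ = 1)
    (paths : Fin t → List (Fin m)) (hcover : ∀ j : Fin m, ∃ ℓ, j ∈ paths ℓ)
    (ω : Fin m → ℝ)
    (Q P : EuclideanSpace ℂ (Fin d) → EuclideanSpace ℂ (Fin d))
    (hQ : ∀ x, Q x = ∑ ℓ, w ℓ • (paths ℓ).foldl
      (fun y v => y + ((ω v : ℂ) * ((b v - (inner ℂ (a v) y : ℂ)) / (‖a v‖ : ℂ) ^ 2)) • a v) x)
    (hP : ∀ x, P x = ∑ ℓ, w ℓ • (paths ℓ).foldl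
      (fun y v => y - ((ω v : ℂ) * ((inner ℂ (a v) y : ℂ) / (‖a v‖ : ℂ) ^ 2)) • a v) x)
    (hPcon : ∀ x, ‖P x‖ ≤ ‖x‖)
    (hPstrict : ∀ x, ‖P x‖ = ‖x‖ → ∀ v, (inner ℂ (a v) x : ℂ) = 0)
    (x0 : EuclideanSpace ℂ (Fin d)) (hx0 : x0 ∈ Submodule.span ℂ (Set.range a))
    (xseq : ℕ → EuclideanSpace ℂ (Fin d)) (hinit : xseq 0 = x0)
    (hrec : ∀ n, xseq (n + 1) = Q (xseq n)) :
    ∃ z : EuclideanSpace ℂ (Fin d),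
      (∀ v, (inner ℂ (a v) z : ℂ) = b v) ∧
      (∀ y, (∀ v, (inner ℂ (a v) y : ℂ) = b v) → ‖z‖ ≤ ‖y‖) ∧
      (∀ y, (∀ v, (inner ℂ (a v) y : ℂ) = b v) → y ≠ z → ‖z‖ < ‖y‖) ∧
      Filter.Tendsto xseq Filter.atTop (nhds z) := by
  classical
  set K : Submodule ℂ (EuclideanSpace ℂ (Fin d)) := Submodule.span ℂ (Set.range a) with hKdef
  have haK : ∀ v, a v ∈ K := fun v => Submodule.subset_span ⟨v, rfl⟩
  -- orthogonality helper
  have horth : ∀ u : EuclideanSpace ℂ (Fin d), (∀ v, (inner ℂ (a v) u : ℂ) = 0) →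
      ∀ y ∈ K, (inner ℂ y u : ℂ) = 0 := by
    intro u hu y hy
    induction hy using Submodule.span_induction with
    | mem x hx => obtain ⟨v, rfl⟩ := hx; exact hu v
    | zero => simp
    | add x y _ _ hx hy => rw [inner_add_left, hx, hy, add_zero]
    | smul c x _ hx => rw [inner_smul_left, hx, mul_zero]
  obtain ⟨xhat, hxhat⟩ := hconsistent
  set z : EuclideanSpace ℂ (Fin d) := (K.orthogonalProjectionOnto xhat : EuclideanSpace ℂ (Fin d))
    with hzdef
  have hzK : z ∈ K := by rw [hzdef]; exact SetLike.coe_mem _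
  have hsol : ∀ v, (inner ℂ (a v) z : ℂ) = b v := by
    intro v
    have h1 : xhat - z ∈ Kᗮ := Submodule.sub_starProjection_mem_orthogonal (K := K) xhat
    have h2 : (inner ℂ (a v) (xhat - z) : ℂ) = 0 :=
      (Submodule.mem_orthogonal K _).1 h1 (a v) (haK v)
    rw [inner_sub_right, hxhat v] at h2
    linear_combination -h2
  -- difference of solutions is orthogonal to K
  have hdiff : ∀ y : EuclideanSpace ℂ (Fin d), (∀ v, (inner ℂ (a v) y : ℂ) = b v) →
      ‖y‖ ^ 2 = ‖z‖ ^ 2 + ‖y - z‖ ^ 2 := by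
    intro y hy
    have h0 : (inner ℂ z (y - z) : ℂ) = 0 := by
      refine horth (y - z) (fun v => ?_) z hzK
      rw [inner_sub_right, hy v, hsol v, sub_self]
    have := norm_add_sq (𝕜 := ℂ) z (y - z)
    rw [h0] at this
    simpa using this
  have hmin : ∀ y, (∀ v, (inner ℂ (a v) y : ℂ) = b v) → ‖z‖ ≤ ‖y‖ := by
    intro y hy
    have h := hdiff y hy
    nlinarith [norm_nonneg y, norm_nonneg z, sq_nonneg ‖y - z‖]
  have hminstrict : ∀ y, (∀ v, (inner ℂ (a v) y : ℂ) = b v) → y ≠ z → ‖z‖ < ‖y‖ := by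
    intro y hy hne
    have h := hdiff y hy
    have h2 : 0 < ‖y - z‖ := norm_pos_iff.2 (sub_ne_zero.2 hne)
    nlinarith [norm_nonneg y, norm_nonneg z]
  -- the linear step map
  set Ps : EuclideanSpace ℂ (Fin d) → Fin m → EuclideanSpace ℂ (Fin d) :=
    fun y v => y - ((ω v : ℂ) * ((inner ℂ (a v) y : ℂ) / (‖a v‖ : ℂ) ^ 2)) • a v with hPs
  set Qs : EuclideanSpace ℂ (Fin d) → Fin m → EuclideanSpace ℂ (Fin d) :=
    fun y v => y + ((ω v : ℂ) * ((b v - (inner ℂ (a v) y : ℂ)) / (‖a v‖ : ℂ) ^ 2)) • a v with hQs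
  have hPeq : ∀ x, P x = ∑ ℓ, w ℓ • (paths ℓ).foldl Ps x := hP
  have hQeq : ∀ x, Q x = ∑ ℓ, w ℓ • (paths ℓ).foldl Qs x := hQ
  have hstep_add : ∀ (v : Fin m) (x y : EuclideanSpace ℂ (Fin d)),
      Ps (x + y) v = Ps x v + Ps y v := by
    intro v x y
    simp only [hPs, inner_add_right]
    have hs : ((ω v : ℂ) * (((inner ℂ (a v) x : ℂ) + inner ℂ (a v) y) / (‖a v‖ : ℂ) ^ 2)) • a v
        = ((ω v : ℂ) * ((inner ℂ (a v) x : ℂ) / (‖a v‖ : ℂ) ^ 2)) • a v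
          + ((ω v : ℂ) * ((inner ℂ (a v) y : ℂ) / (‖a v‖ : ℂ) ^ 2)) • a v := by
      rw [← add_smul]; congr 1; ring
    rw [hs]; abel
  have hstep_smul : ∀ (v : Fin m) (c : ℂ) (x : EuclideanSpace ℂ (Fin d)),
      Ps (c • x) v = c • Ps x v := by
    intro v c x
    simp only [hPs, inner_smul_right, smul_sub, smul_smul]
    congr 2
    ring
  have hstep_mem : ∀ (v : Fin m) (x : EuclideanSpace ℂ (Fin d)), x ∈ K → Ps x v ∈ K := by
    intro v x hx
    exact K.sub_mem hx (K.smul_mem _ (haK v))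
  have hstepQ : ∀ (v : Fin m) (x : EuclideanSpace ℂ (Fin d)),
      Qs x v = Ps (x - z) v + z := by
    intro v x
    simp only [hPs, hQs, inner_sub_right, hsol v]
    have hs : ((ω v : ℂ) * ((b v - (inner ℂ (a v) x : ℂ)) / (‖a v‖ : ℂ) ^ 2)) • a v
        = -(((ω v : ℂ) * (((inner ℂ (a v) x : ℂ) - b v) / (‖a v‖ : ℂ) ^ 2)) • a v) := by
      rw [← neg_smul]; congr 1; ring
    rw [hs]; abel
  have hfold_add : ∀ (l : List (Fin m)) (x y : EuclideanSpace ℂ (Fin d)),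
      l.foldl Ps (x + y) = l.foldl Ps x + l.foldl Ps y := by
    intro l
    induction l with
    | nil => intro x y; simp
    | cons v l ih =>
      intro x y
      simp only [List.foldl_cons]
      rw [hstep_add v x y, ih]
  have hfold_smul : ∀ (l : List (Fin m)) (c : ℂ) (x : EuclideanSpace ℂ (Fin d)),
      l.foldl Ps (c • x) = c • l.foldl Ps x := by
    intro l
    induction l with
    | nil => intro c x; simp
    | cons v l ih =>
      intro c x
      simp only [List.foldl_cons]
      rw [hstep_smul v c x, ih]
  have hfold_mem : ∀ (l : List (Fin m)) (x : EuclideanSpace ℂ (Fin d)),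
      x ∈ K → l.foldl Ps x ∈ K := by
    intro l
    induction l with
    | nil => intro x hx; simpa using hx
    | cons v l ih =>
      intro x hx
      simp only [List.foldl_cons]
      exact ih _ (hstep_mem v x hx)
  have hfoldQ : ∀ (l : List (Fin m)) (x : EuclideanSpace ℂ (Fin d)),
      l.foldl Qs x = l.foldl Ps (x - z) + z := by
    intro l
    induction l with
    | nil => intro x; simp
    | cons v l ih =>
      intro x
      simp only [List.foldl_cons]
      rw [ih, hstepQ v x, add_sub_cancel_right]
  have hPadd : ∀ x y, P (x + y) = P x + P y := by
    intro x y
    simp only [hPeq, hfold_add, smul_add, Finset.sum_add_distrib]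
  have hPsmul : ∀ (c : ℂ) x, P (c • x) = c • P x := by
    intro c x
    simp only [hPeq, hfold_smul]
    rw [Finset.smul_sum]
    exact Finset.sum_congr rfl fun ℓ _ => smul_comm _ _ _
  have hP0 : P 0 = 0 := by
    have := hPsmul 0 0
    simpa using this
  have hPmem : ∀ x ∈ K, P x ∈ K := by
    intro x hx
    rw [hPeq]
    exact Submodule.sum_mem _ fun ℓ _ => Submodule.smul_of_tower_mem _ _ (hfold_mem _ x hx)
  have hQP : ∀ x, Q x = P (x - z) + z := by
    intro x
    rw [hQeq, hPeq]
    simp only [hfoldQ, smul_add, Finset.sum_add_distrib, ← Finset.sum_smul, hw1, one_smul]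
  -- continuity of P
  have hPcont : Continuous P := by
    let Plin : EuclideanSpace ℂ (Fin d) →ₗ[ℂ] EuclideanSpace ℂ (Fin d) :=
      { toFun := P, map_add' := hPadd, map_smul' := hPsmul }
    exact Plin.continuous_of_finiteDimensional
  -- contraction constant on K
  obtain ⟨r, hr0, hr1, hrb⟩ : ∃ r : ℝ, 0 ≤ r ∧ r < 1 ∧ ∀ u ∈ K, ‖P u‖ ≤ r * ‖u‖ := by
    set S : Set (EuclideanSpace ℂ (Fin d)) := (K : Set _) ∩ Metric.sphere 0 1 with hSdef
    have hScomp : IsCompact S :=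
      (isCompact_sphere (0 : EuclideanSpace ℂ (Fin d)) 1).inter_left
        K.closed_of_finiteDimensional
    have hnormalize : ∀ u : EuclideanSpace ℂ (Fin d), u ∈ K → u ≠ 0 →
        ((‖u‖ : ℂ)⁻¹ • u ∈ S) := by
      intro u huK hu0
      have hn : ‖u‖ ≠ 0 := norm_ne_zero_iff.2 hu0
      constructor
      · exact K.smul_mem _ huK
      · rw [mem_sphere_zero_iff_norm, norm_smul]
        simp [hn]
    by_cases hS : S.Nonempty
    · obtain ⟨u0, hu0S, hmax⟩ := hScomp.exists_isMaxOn hS (hPcont.norm).continuousOn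
      have hu0K : u0 ∈ K := hu0S.1
      have hu0n : ‖u0‖ = 1 := mem_sphere_zero_iff_norm.1 hu0S.2
      refine ⟨‖P u0‖, norm_nonneg _, ?_, ?_⟩
      · have hle : ‖P u0‖ ≤ 1 := by simpa [hu0n] using hPcon u0
        rcases lt_or_eq_of_le hle with h | h
        · exact h
        · exfalso
          have heq : ‖P u0‖ = ‖u0‖ := by rw [h, hu0n]
          have h0 : (inner ℂ u0 u0 : ℂ) = 0 := horth u0 (hPstrict u0 heq) u0 hu0K
          have : u0 = 0 := inner_self_eq_zero.1 h0
          rw [this, norm_zero] at hu0n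
          exact one_ne_zero hu0n.symm
      · intro u huK
        rcases eq_or_ne u 0 with rfl | hu0
        · simp [hP0]
        · have hn : ‖u‖ ≠ 0 := norm_ne_zero_iff.2 hu0
          have hmem := hnormalize u huK hu0
          have hb := hmax hmem
          simp only [Set.mem_setOf_eq] at hb
          rw [hPsmul] at hb
          rw [norm_smul] at hb
          simp only [norm_inv, Complex.norm_real, Real.norm_eq_abs,
            abs_of_nonneg (norm_nonneg u)] at hb
          have hpos : 0 < ‖u‖ := lt_of_le_of_ne (norm_nonneg u) (Ne.symm hn)
          calc ‖P u‖ = ‖u‖ * (‖u‖⁻¹ * ‖P u‖) := by field_simp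
          _ ≤ ‖u‖ * ‖P u0‖ := by
              apply mul_le_mul_of_nonneg_left hb (norm_nonneg u)
          _ = ‖P u0‖ * ‖u‖ := mul_comm _ _
    · refine ⟨0, le_refl 0, one_pos, ?_⟩
      intro u huK
      rcases eq_or_ne u 0 with rfl | hu0
      · simp [hP0]
      · exact absurd ⟨_, hnormalize u huK hu0⟩ hS
  -- error sequence
  set e : ℕ → EuclideanSpace ℂ (Fin d) := fun n => xseq n - z with hedef
  have herec : ∀ n, e (n + 1) = P (e n) := by
    intro n
    simp only [hedef]
    rw [hrec n, hQP (xseq n), add_sub_cancel_right]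
  have hemem : ∀ n, e n ∈ K := by
    intro n
    induction n with
    | zero => simp only [hedef, hinit]; exact K.sub_mem hx0 hzK
    | succ n ih => rw [herec n]; exact hPmem _ ih
  have hbound : ∀ n, ‖e n‖ ≤ r ^ n * ‖e 0‖ := by
    intro n
    induction n with
    | zero => simp
    | succ n ih =>
      rw [herec n]
      calc ‖P (e n)‖ ≤ r * ‖e n‖ := hrb _ (hemem n)
      _ ≤ r * (r ^ n * ‖e 0‖) := mul_le_mul_of_nonneg_left ih hr0
      _ = r ^ (n + 1) * ‖e 0‖ := by ring
  have hten : Filter.Tendsto e Filter.atTop (nhds 0) := by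
    apply squeeze_zero_norm hbound
    have := (tendsto_pow_atTop_nhds_zero_of_lt_one hr0 hr1).mul_const ‖e 0‖
    simpa using this
  refine ⟨z, hsol, hmin, hminstrict, ?_⟩
  have h2 := hten.add_const z
  rw [zero_add] at h2
  have h3 : (fun n => e n + z) = xseq := by
    funext n
    simp [hedef]
  rwa [h3] at h2
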